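/- First variation of the control action: let w : ℝ × ℝ^d → ℝ^d be continuously differentiable with bounded derivative, let X : [0,1] → ℝ^d be continuously differentiable, and set q(t) := Ẋ(t) − w(t, X(t)); assume q is continuously differentiable. Then for every continuously differentiable variation η : [0,1] → ℝ^d with η(0) = η(1) = 0, the derivative at ε = 0 of the map ε ↦ ∫₀¹ (1/2)‖Ẋ(t) + ε η̇(t) − w(t, X(t) + ε η(t))‖² dt exists and equals −∫₀¹ ⟨q̇(t) + (D_x w(t, X(t)))^T q(t), η(t)⟩ dt. In particular, if q̇(t) = −(D_x w(t, X(t)))^T q(t) for all t, then the first variation of the action vanishes for every such η. -/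

import Mathlib

set_option maxHeartbeats 1000000

open scoped RealInnerProductSpace
open intervalIntegral Metric Set

/-- **First variation of the control action.** Let `w` be C¹ with bounded derivative (spatial
Fréchet derivative `Dw`), `X : [0,1] → ℝ^d` be C¹, and `q(t) := Ẋ(t) − w(t, X(t))` be C¹.
Then for every C¹ variation `η` with `η(0) = η(1) = 0`, the map
`ε ↦ ∫₀¹ (1/2)‖Ẋ + ε η̇ − w(t, X + ε η)‖² dt` is differentiable at `ε = 0` with derivative
`−∫₀¹ ⟨q̇ + (Dₓw(t, X))ᵀ q, η⟩ dt`; in particular, if `q̇ = −(Dₓw(t, X))ᵀ q` then the first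
variation vanishes for every such `η`. -/
theorem first_variation_control_action (d : ℕ)
    (w : ℝ → EuclideanSpace ℝ (Fin d) → EuclideanSpace ℝ (Fin d))
    (Dw : ℝ → EuclideanSpace ℝ (Fin d) →
      (EuclideanSpace ℝ (Fin d) →L[ℝ] EuclideanSpace ℝ (Fin d)))
    (hw : ContDiff ℝ 1 (Function.uncurry w))
    (hDw : ∀ t x, HasFDerivAt (w t) (Dw t x) x)
    (hbdd : ∃ M : ℝ, ∀ p : ℝ × EuclideanSpace ℝ (Fin d),
      ‖fderiv ℝ (Function.uncurry w) p‖ ≤ M)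
    (X q : ℝ → EuclideanSpace ℝ (Fin d))
    (hX : ContDiff ℝ 1 X)
    (hq_def : ∀ t, q t = deriv X t - w t (X t))
    (hq : ContDiff ℝ 1 q) :
    ∀ η : ℝ → EuclideanSpace ℝ (Fin d), ContDiff ℝ 1 η → η 0 = 0 → η 1 = 0 →
      (HasDerivAt (fun ε : ℝ =>
          ∫ t in (0 : ℝ)..1, (1 / 2) * ‖deriv X t + ε • deriv η t - w t (X t + ε • η t)‖ ^ 2)
        (-∫ t in (0 : ℝ)..1,
          ⟪deriv q t + (ContinuousLinearMap.adjoint (Dw t (X t))) (q t), η t⟫) 0) ∧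
      ((∀ t, deriv q t = -(ContinuousLinearMap.adjoint (Dw t (X t))) (q t)) →
        HasDerivAt (fun ε : ℝ =>
          ∫ t in (0 : ℝ)..1, (1 / 2) * ‖deriv X t + ε • deriv η t - w t (X t + ε • η t)‖ ^ 2)
          0 0) := by
  intro η hη hη0 hη1
  -- continuity of derivatives
  have hX' : Continuous (deriv X) := hX.continuous_deriv le_rfl
  have hη' : Continuous (deriv η) := hη.continuous_deriv le_rfl
  have hq' : Continuous (deriv q) := hq.continuous_deriv le_rfl
  have hXc : Continuous X := hX.continuous
  have hηc : Continuous η := hη.continuous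
  have hqc : Continuous q := hq.continuous
  have hwc : Continuous (Function.uncurry w) := hw.continuous
  -- joint continuity of Dw
  have hDweq : ∀ t x, Dw t x =
      (fderiv ℝ (Function.uncurry w) (t, x)).comp (ContinuousLinearMap.inr ℝ ℝ (EuclideanSpace ℝ (Fin d))) := by
    intro t x
    have h1 : HasFDerivAt (Function.uncurry w) (fderiv ℝ (Function.uncurry w) (t, x)) (t, x) :=
      (hw.differentiable one_ne_zero (t, x)).hasFDerivAt
    have h2 : HasFDerivAt (fun y : EuclideanSpace ℝ (Fin d) => (t, y)) (ContinuousLinearMap.inr ℝ ℝ (EuclideanSpace ℝ (Fin d))) x :=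
      HasFDerivAt.prodMk (hasFDerivAt_const t x) (hasFDerivAt_id x)
    exact (hDw t x).unique (h1.comp x h2)
  have hDwcont : Continuous (fun p : ℝ × EuclideanSpace ℝ (Fin d) => Dw p.1 p.2) := by
    have : Continuous (fun p : ℝ × EuclideanSpace ℝ (Fin d) =>
        (fderiv ℝ (Function.uncurry w) p).comp (ContinuousLinearMap.inr ℝ ℝ (EuclideanSpace ℝ (Fin d)))) :=
      (hw.continuous_fderiv one_ne_zero).clm_comp continuous_const
    exact this.congr (fun p => (hDweq p.1 p.2).symm)
  -- the integrand and its ε-derivative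
  set y : ℝ → ℝ → EuclideanSpace ℝ (Fin d) := fun ε t => deriv X t + ε • deriv η t - w t (X t + ε • η t) with hy_def
  set F' : ℝ → ℝ → ℝ :=
    fun ε t => ⟪y ε t, deriv η t - Dw t (X t + ε • η t) (η t)⟫ with hF'_def
  have hycont : Continuous (fun p : ℝ × ℝ => y p.1 p.2) := by
    apply Continuous.sub
    · exact (hX'.comp continuous_snd).add (continuous_fst.smul (hη'.comp continuous_snd))
    · exact hwc.comp (continuous_snd.prodMk
        ((hXc.comp continuous_snd).add (continuous_fst.smul (hηc.comp continuous_snd))))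
  have hF'cont : Continuous (fun p : ℝ × ℝ => F' p.1 p.2) := by
    apply hycont.inner
    apply Continuous.sub (hη'.comp continuous_snd)
    exact (hDwcont.comp (continuous_snd.prodMk
        ((hXc.comp continuous_snd).add (continuous_fst.smul (hηc.comp continuous_snd))))).clm_apply
      (hηc.comp continuous_snd)
  -- pointwise derivative in ε
  have hderiv : ∀ t ε : ℝ, HasDerivAt (fun e : ℝ => (1 / 2 : ℝ) * ‖y e t‖ ^ 2) (F' ε t) ε := by
    intro t ε
    have hlin : HasDerivAt (fun e : ℝ => X t + e • η t) (η t) ε := by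
      simpa using ((hasDerivAt_id ε).smul_const (η t)).const_add (X t)
    have hy1 : HasDerivAt (fun e : ℝ => y e t)
        (deriv η t - Dw t (X t + ε • η t) (η t)) ε := by
      have h2 : HasDerivAt (fun e : ℝ => w t (X t + e • η t))
          (Dw t (X t + ε • η t) (η t)) ε :=
        (hDw t (X t + ε • η t)).comp_hasDerivAt ε hlin
      have h1 : HasDerivAt (fun e : ℝ => deriv X t + e • deriv η t) (deriv η t) ε := by
        simpa using ((hasDerivAt_id ε).smul_const (deriv η t)).const_add (deriv X t)
      exact h1.sub h2
    have := (hy1.inner ℝ hy1).const_mul (1 / 2 : ℝ)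
    have heq : (fun e : ℝ => (1 / 2 : ℝ) * ⟪y e t, y e t⟫) =
        fun e : ℝ => (1 / 2 : ℝ) * ‖y e t‖ ^ 2 := by
      funext e; rw [real_inner_self_eq_norm_sq]
    rw [heq] at this
    refine this.congr_deriv ?_
    rw [real_inner_comm (y ε t)]
    simp [hF'_def]; ring
  -- uniform bound on the derivative
  obtain ⟨C, hC⟩ : ∃ C : ℝ, ∀ p ∈ (Icc (-1 : ℝ) 1 ×ˢ Icc (0 : ℝ) 1), ‖F' p.1 p.2‖ ≤ C :=
    (isCompact_Icc.prod isCompact_Icc).exists_bound_of_continuousOn hF'cont.continuousOn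
  -- differentiate under the integral
  clear_value y F'
  have hFcont : ∀ ε : ℝ, Continuous (fun t => (1 / 2 : ℝ) * ‖y ε t‖ ^ 2) := fun ε =>
    continuous_const.mul (((hycont.comp (Continuous.prodMk_right ε)).norm).pow 2)
  have hF'0cont : Continuous (fun t => F' 0 t) := hF'cont.comp (Continuous.prodMk_right 0)
  have hb : ∀ᵐ t ∂(MeasureTheory.volume : MeasureTheory.Measure ℝ), t ∈ Set.uIoc (0:ℝ) 1 →
      ∀ x ∈ ball (0:ℝ) 1, ‖F' x t‖ ≤ C := by
    refine Filter.Eventually.of_forall (fun t ht ε hε => ?_)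
    apply hC (ε, t)
    have h1 : |ε| < 1 := by simpa using mem_ball_zero_iff.mp hε
    have h2 := abs_lt.mp h1
    refine ⟨⟨h2.1.le, h2.2.le⟩, ?_⟩
    have h3 : t ∈ Set.Ioc (0:ℝ) 1 := by
      rwa [Set.uIoc_of_le (by norm_num : (0:ℝ) ≤ 1)] at ht
    exact ⟨h3.1.le, h3.2⟩
  have key : IntervalIntegrable (F' 0) MeasureTheory.volume 0 1 ∧
      HasDerivAt (fun ε : ℝ => ∫ t in (0:ℝ)..1, (1/2:ℝ) * ‖y ε t‖^2)
        (∫ t in (0:ℝ)..1, F' 0 t) 0 :=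
    intervalIntegral.hasDerivAt_integral_of_dominated_loc_of_deriv_le
      (bound := fun _ => C) (ball_mem_nhds (0:ℝ) one_pos)
      (Filter.Eventually.of_forall (fun ε => ((hFcont ε).aestronglyMeasurable)))
      ((hFcont 0).intervalIntegrable _ _)
      (hF'0cont.aestronglyMeasurable)
      hb
      intervalIntegrable_const
      (Filter.Eventually.of_forall (fun t _ ε _ => hderiv t ε))
  obtain ⟨-, hkey⟩ := key
  -- identify F' 0
  have hF'0 : ∀ t, F' 0 t = ⟪q t, deriv η t⟫ -
      ⟪(ContinuousLinearMap.adjoint (Dw t (X t))) (q t), η t⟫ := by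
    intro t
    rw [hF'_def, hy_def]
    simp only [zero_smul, add_zero, ← hq_def, inner_sub_right,
      ContinuousLinearMap.adjoint_inner_left]
  -- continuity of auxiliary integrands
  have hDXc : Continuous fun t => (ContinuousLinearMap.adjoint (Dw t (X t))) (q t) := by
    have h1 : Continuous fun t => Dw t (X t) :=
      hDwcont.comp (continuous_id.prodMk hXc)
    have h2 : Continuous fun t => ContinuousLinearMap.adjoint (Dw t (X t)) :=
      (ContinuousLinearMap.adjoint
        (𝕜 := ℝ) (E := EuclideanSpace ℝ (Fin d))
        (F := EuclideanSpace ℝ (Fin d))).continuous.comp h1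
    exact h2.clm_apply hqc
  have h1c : Continuous fun t => ⟪q t, deriv η t⟫ := hqc.inner hη'
  have h2c : Continuous fun t =>
      ⟪(ContinuousLinearMap.adjoint (Dw t (X t))) (q t), η t⟫ := hDXc.inner hηc
  have h3c : Continuous fun t => ⟪deriv q t, η t⟫ := hq'.inner hηc
  -- integration by parts
  have hibp : (∫ t in (0:ℝ)..1, ⟪q t, deriv η t⟫) =
      -∫ t in (0:ℝ)..1, ⟪deriv q t, η t⟫ := by
    have hd : ∀ t ∈ Set.uIcc (0:ℝ) 1, HasDerivAt (fun t => ⟪q t, η t⟫)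
        (⟪q t, deriv η t⟫ + ⟪deriv q t, η t⟫) t := fun t _ =>
      ((hq.differentiable one_ne_zero t).hasDerivAt).inner ℝ
        ((hη.differentiable one_ne_zero t).hasDerivAt)
    have hsum := intervalIntegral.integral_eq_sub_of_hasDerivAt hd
      ((h1c.add h3c).intervalIntegrable _ _)
    rw [hη0, hη1, inner_zero_right, inner_zero_right, sub_zero,
      intervalIntegral.integral_add (h1c.intervalIntegrable _ _)
        (h3c.intervalIntegrable _ _)] at hsum
    linarith
  -- the value of the derivative
  have hval : (∫ t in (0:ℝ)..1, F' 0 t) =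
      -∫ t in (0:ℝ)..1,
        ⟪deriv q t + (ContinuousLinearMap.adjoint (Dw t (X t))) (q t), η t⟫ := by
    rw [intervalIntegral.integral_congr (g := fun t => ⟪q t, deriv η t⟫ -
        ⟪(ContinuousLinearMap.adjoint (Dw t (X t))) (q t), η t⟫) (fun t _ => hF'0 t)]
    rw [intervalIntegral.integral_sub (h1c.intervalIntegrable _ _)
      (h2c.intervalIntegrable _ _), hibp]
    rw [intervalIntegral.integral_congr
      (g := fun t => ⟪deriv q t, η t⟫ +
        ⟪(ContinuousLinearMap.adjoint (Dw t (X t))) (q t), η t⟫)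
      (fun t _ => inner_add_left _ _ _)]
    rw [intervalIntegral.integral_add (h3c.intervalIntegrable _ _)
      (h2c.intervalIntegrable _ _)]
    ring
  rw [hval] at hkey
  simp only [hy_def] at hkey
  refine ⟨hkey, fun h => ?_⟩
  have hz : (-∫ t in (0:ℝ)..1,
      ⟪deriv q t + (ContinuousLinearMap.adjoint (Dw t (X t))) (q t), η t⟫) = 0 := by
    have : ∀ t, ⟪deriv q t + (ContinuousLinearMap.adjoint (Dw t (X t))) (q t), η t⟫
        = (0:ℝ) := by
      intro t
      rw [h t, neg_add_cancel, inner_zero_left]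
    rw [intervalIntegral.integral_congr (g := fun _ => (0:ℝ)) (fun t _ => this t)]
    simp
  rw [hz] at hkey
  exact hkey
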